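/- Let S_{a,b} be the double star with central vertices u, v of degrees a ≥ 2 and b ≥ 2 respectively. If a ≥ 3 and b ≥ 3 then χ_md(S_{a,b}) = 3; otherwise χ_md(S_{a,b}) = 2. -/
import Mathlib


open SimpleGraph

/-- A majority dominator coloring: a proper coloring such that every vertex `v`
dominates at least half of some (nonempty) color class, i.e. there is a color class `C`
with `|C| ≤ 2 * |C ∩ N[v]|`. -/
def SimpleGraph.IsMajorityDominatorColoring {V : Type*} (G : SimpleGraph V) {k : ℕ}
    (c : V → Fin k) : Prop :=
  (∀ u v, G.Adj u v → c u ≠ c v) ∧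
  ∀ v : V, ∃ i : Fin k,
    {u | c u = i}.Nonempty ∧
    {u | c u = i}.ncard ≤ 2 * {u | c u = i ∧ (u = v ∨ G.Adj v u)}.ncard

/-- The majority dominator chromatic number. -/
noncomputable def SimpleGraph.majorityDominatorChromaticNumber {V : Type*}
    (G : SimpleGraph V) : ℕ :=
  sInf {k | ∃ c : V → Fin k, G.IsMajorityDominatorColoring c}

/-- The double star `S_{a,b}`: central vertices `u = Sum.inl none` and
`v = Sum.inr none` joined by an edge, with `a - 1` leaves attached to `u`
and `b - 1` leaves attached to `v`, so that `deg u = a` and `deg v = b`. -/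
def doubleStar (a b : ℕ) : SimpleGraph (Option (Fin (a - 1)) ⊕ Option (Fin (b - 1))) :=
  SimpleGraph.fromRel (fun x y =>
    (x = Sum.inl none ∧ y = Sum.inr none) ∨
    (∃ i, x = Sum.inl none ∧ y = Sum.inl (some i)) ∨
    (∃ j, x = Sum.inr none ∧ y = Sum.inr (some j)))

/-! ### Auxiliary lemmas -/

lemma doubleStar_adj {a b : ℕ} {x y : Option (Fin (a - 1)) ⊕ Option (Fin (b - 1))} :
    (doubleStar a b).Adj x y ↔
      (x = Sum.inl none ∧ y = Sum.inr none) ∨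
      (x = Sum.inr none ∧ y = Sum.inl none) ∨
      (x = Sum.inl none ∧ ∃ i, y = Sum.inl (some i)) ∨
      (y = Sum.inl none ∧ ∃ i, x = Sum.inl (some i)) ∨
      (x = Sum.inr none ∧ ∃ j, y = Sum.inr (some j)) ∨
      (y = Sum.inr none ∧ ∃ j, x = Sum.inr (some j)) := by
  simp only [doubleStar, SimpleGraph.fromRel_adj]
  constructor
  · rintro ⟨hne, h | h⟩ <;> tauto
  · rintro (⟨rfl, rfl⟩ | ⟨rfl, rfl⟩ | ⟨rfl, i, rfl⟩ | ⟨rfl, i, rfl⟩ | ⟨rfl, j, rfl⟩ | ⟨rfl, j, rfl⟩)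
    · exact ⟨by simp, Or.inl (Or.inl ⟨rfl, rfl⟩)⟩
    · exact ⟨by simp, Or.inr (Or.inl ⟨rfl, rfl⟩)⟩
    · exact ⟨by simp, Or.inl (Or.inr (Or.inl ⟨i, rfl, rfl⟩))⟩
    · exact ⟨by simp, Or.inr (Or.inr (Or.inl ⟨i, rfl, rfl⟩))⟩
    · exact ⟨by simp, Or.inl (Or.inr (Or.inr ⟨j, rfl, rfl⟩))⟩
    · exact ⟨by simp, Or.inr (Or.inr (Or.inr ⟨j, rfl, rfl⟩))⟩

lemma ds_adj_LR {a b : ℕ} :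
    (doubleStar a b).Adj (Sum.inl none) (Sum.inr none) :=
  doubleStar_adj.mpr (Or.inl ⟨rfl, rfl⟩)

lemma ds_adj_Lleaf {a b : ℕ} (i : Fin (a - 1)) :
    (doubleStar a b).Adj (Sum.inl none) (Sum.inl (some i)) :=
  doubleStar_adj.mpr (Or.inr (Or.inr (Or.inl ⟨rfl, i, rfl⟩)))

lemma ds_adj_Rleaf {a b : ℕ} (j : Fin (b - 1)) :
    (doubleStar a b).Adj (Sum.inr none) (Sum.inr (some j)) :=
  doubleStar_adj.mpr (Or.inr (Or.inr (Or.inr (Or.inr (Or.inl ⟨rfl, j, rfl⟩)))))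

lemma ds_leafL_adj {a b : ℕ} {i : Fin (a - 1)} {u}
    (h : (doubleStar a b).Adj (Sum.inl (some i)) u) : u = Sum.inl none := by
  rw [doubleStar_adj] at h
  rcases h with ⟨h, _⟩ | ⟨h, _⟩ | ⟨h, _⟩ | ⟨h, _⟩ | ⟨h, _⟩ | ⟨h, hh⟩ <;> simp_all

lemma ds_leafR_adj {a b : ℕ} {j : Fin (b - 1)} {u}
    (h : (doubleStar a b).Adj (Sum.inr (some j)) u) : u = Sum.inr none := by
  rw [doubleStar_adj] at h
  rcases h with ⟨h, _⟩ | ⟨h, _⟩ | ⟨h, _⟩ | ⟨h, hh⟩ | ⟨h, _⟩ | ⟨h, _⟩ <;> simp_all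

/-- sInf characterization. -/
lemma sInf_eq_of_mem {S : Set ℕ} {n : ℕ} (h : n ∈ S) (h' : ∀ m, m < n → m ∉ S) :
    sInf S = n := by
  have hmem := Nat.sInf_mem (⟨n, h⟩ : S.Nonempty)
  rcases lt_or_ge (sInf S) n with hl | hg
  · exact absurd hmem (h' _ hl)
  · exact le_antisymm (Nat.sInf_le h) hg

/-- domination via a singleton color class. -/
lemma dom_of_singleton {V : Type*} (G : SimpleGraph V) {k : ℕ} (c : V → Fin k)
    (i : Fin k) (w e : V) (hcl : {u | c u = i} = {e}) (he : e = w ∨ G.Adj w e) :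
    ∃ i : Fin k, {u | c u = i}.Nonempty ∧
      {u | c u = i}.ncard ≤ 2 * {u | c u = i ∧ (u = w ∨ G.Adj w u)}.ncard := by
  refine ⟨i, by rw [hcl]; exact Set.singleton_nonempty e, ?_⟩
  have hint : {u | c u = i ∧ (u = w ∨ G.Adj w u)} = {e} := by
    apply subset_antisymm
    · intro u hu
      exact (Set.ext_iff.mp hcl u).mp hu.1
    · intro u hu
      have hu' : u = e := hu
      subst hu'
      exact ⟨(Set.ext_iff.mp hcl u).mpr rfl, he⟩
  rw [hcl, hint, Set.ncard_singleton]
  omega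

/-- domination via a pair color class with at least one element in N[w]. -/
lemma dom_of_pair {V : Type*} [Finite V] (G : SimpleGraph V) {k : ℕ} (c : V → Fin k)
    (i : Fin k) (w e₁ e₂ : V) (hne : e₁ ≠ e₂)
    (hcl : {u | c u = i} = {e₁, e₂})
    (he : (e₁ = w ∨ G.Adj w e₁) ∨ (e₂ = w ∨ G.Adj w e₂)) :
    ∃ i : Fin k, {u | c u = i}.Nonempty ∧
      {u | c u = i}.ncard ≤ 2 * {u | c u = i ∧ (u = w ∨ G.Adj w u)}.ncard := by
  refine ⟨i, by rw [hcl]; exact ⟨e₁, by simp⟩, ?_⟩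
  have hne' : {u | c u = i ∧ (u = w ∨ G.Adj w u)}.Nonempty := by
    rcases he with he | he
    · exact ⟨e₁, (Set.ext_iff.mp hcl e₁).mpr (by simp), he⟩
    · exact ⟨e₂, (Set.ext_iff.mp hcl e₂).mpr (by simp), he⟩
  have h1 : 1 ≤ {u | c u = i ∧ (u = w ∨ G.Adj w u)}.ncard :=
    (Set.ncard_pos (Set.toFinite _)).mpr hne'
  rw [hcl, Set.ncard_pair hne]
  omega

/-- The 3-coloring. -/
def c3 (a b : ℕ) : Option (Fin (a - 1)) ⊕ Option (Fin (b - 1)) → Fin 3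
  | Sum.inl none => 0
  | Sum.inl (some _) => 2
  | Sum.inr none => 1
  | Sum.inr (some _) => 2

/-- The 2-coloring. -/
def c2 (a b : ℕ) : Option (Fin (a - 1)) ⊕ Option (Fin (b - 1)) → Fin 2
  | Sum.inl none => 0
  | Sum.inl (some _) => 1
  | Sum.inr none => 1
  | Sum.inr (some _) => 0

lemma mem3 {a b : ℕ} :
    (doubleStar a b).IsMajorityDominatorColoring (c3 a b) := by
  constructor
  · intro u v huv
    rw [doubleStar_adj] at huv
    rcases huv with ⟨rfl, rfl⟩ | ⟨rfl, rfl⟩ | ⟨rfl, i, rfl⟩ | ⟨rfl, i, rfl⟩ | ⟨rfl, j, rfl⟩ |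
      ⟨rfl, j, rfl⟩ <;> simp [c3]
  · intro w
    have hcl0 : {u | c3 a b u = 0} = {Sum.inl none} := by
      ext u
      rcases u with (_ | i) | (_ | j) <;> simp [c3]
    have hcl1 : {u | c3 a b u = 1} = {Sum.inr none} := by
      ext u
      rcases u with (_ | i) | (_ | j) <;> simp [c3]
    rcases w with (_ | i) | (_ | j)
    · exact dom_of_singleton _ _ 1 _ _ hcl1 (Or.inr ds_adj_LR)
    · exact dom_of_singleton _ _ 0 _ _ hcl0 (Or.inr (ds_adj_Lleaf i).symm)
    · exact dom_of_singleton _ _ 0 _ _ hcl0 (Or.inr ds_adj_LR.symm)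
    · exact dom_of_singleton _ _ 1 _ _ hcl1 (Or.inr (ds_adj_Rleaf j).symm)

lemma c2_proper {a b : ℕ} :
    ∀ u v, (doubleStar a b).Adj u v → c2 a b u ≠ c2 a b v := by
  intro u v huv
  rw [doubleStar_adj] at huv
  rcases huv with ⟨rfl, rfl⟩ | ⟨rfl, rfl⟩ | ⟨rfl, i, rfl⟩ | ⟨rfl, i, rfl⟩ | ⟨rfl, j, rfl⟩ |
    ⟨rfl, j, rfl⟩ <;> simp [c2]

/-- With 2 colors, every vertex fails when a,b ≥ 3. -/
lemma not_two {a b : ℕ} (ha : 3 ≤ a) (hb : 3 ≤ b)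
    (c : Option (Fin (a - 1)) ⊕ Option (Fin (b - 1)) → Fin 2)
    (h : (doubleStar a b).IsMajorityDominatorColoring c) : False := by
  obtain ⟨hp, hdom⟩ := h
  have hLR : c (Sum.inl none) ≠ c (Sum.inr none) := hp _ _ ds_adj_LR
  have hopt : ∀ w, c w = c (Sum.inl none) ∨ c w = c (Sum.inr none) := by
    intro w
    have h1 := (c w).isLt
    have h2 := (c (Sum.inl none)).isLt
    have h3 := (c (Sum.inr none)).isLt
    have h4 : (c (Sum.inl none)).val ≠ (c (Sum.inr none)).val :=
      fun h => hLR (Fin.ext h)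
    have : (c w).val = (c (Sum.inl none)).val ∨ (c w).val = (c (Sum.inr none)).val := by omega
    rcases this with h | h
    · exact Or.inl (Fin.ext h)
    · exact Or.inr (Fin.ext h)
  set x : Option (Fin (a - 1)) ⊕ Option (Fin (b - 1)) := Sum.inl (some ⟨0, by omega⟩) with hx
  obtain ⟨i, hne, hcard⟩ := hdom x
  have hiopt : i = c (Sum.inl none) ∨ i = c (Sum.inr none) := by
    have h1 := i.isLt
    have h2 := (c (Sum.inl none)).isLt
    have h3 := (c (Sum.inr none)).isLt
    have h4 : (c (Sum.inl none)).val ≠ (c (Sum.inr none)).val :=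
      fun h => hLR (Fin.ext h)
    have : i.val = (c (Sum.inl none)).val ∨ i.val = (c (Sum.inr none)).val := by omega
    rcases this with h | h
    · exact Or.inl (Fin.ext h)
    · exact Or.inr (Fin.ext h)
  have hcx : c x ≠ c (Sum.inl none) := hp _ _ (ds_adj_Lleaf _).symm
  rcases hiopt with rfl | rfl
  · -- class of c L: contains L and all right leaves
    have hsub : ({Sum.inl none, Sum.inr (some ⟨0, by omega⟩), Sum.inr (some ⟨1, by omega⟩)} :
        Set (Option (Fin (a - 1)) ⊕ Option (Fin (b - 1)))) ⊆ {u | c u = c (Sum.inl none)} := by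
      rintro u (rfl | rfl | rfl)
      · rfl
      · exact (hopt _).resolve_right (hp _ _ (ds_adj_Rleaf _).symm)
      · exact (hopt _).resolve_right (hp _ _ (ds_adj_Rleaf _).symm)
    have h3le : 3 ≤ {u | c u = c (Sum.inl none)}.ncard := by
      have hc : ({Sum.inl none, Sum.inr (some ⟨0, by omega⟩), Sum.inr (some ⟨1, by omega⟩)} :
          Set (Option (Fin (a - 1)) ⊕ Option (Fin (b - 1)))).ncard = 3 := by
        rw [Set.ncard_insert_of_notMem (by simp), Set.ncard_pair (by simp)]
      calc 3 = _ := hc.symm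
        _ ≤ _ := Set.ncard_le_ncard hsub (Set.toFinite _)
    have hint : {u | c u = c (Sum.inl none) ∧ (u = x ∨ (doubleStar a b).Adj x u)} ⊆
        {Sum.inl none} := by
      rintro u ⟨h1, h2 | h2⟩
      · subst h2; exact absurd h1 hcx
      · exact ds_leafL_adj h2
    have hle1 : {u | c u = c (Sum.inl none) ∧ (u = x ∨ (doubleStar a b).Adj x u)}.ncard ≤ 1 := by
      calc _ ≤ ({Sum.inl none} : Set _).ncard := Set.ncard_le_ncard hint (Set.toFinite _)
        _ = 1 := Set.ncard_singleton _
    omega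
  · -- class of c R: contains R and all left leaves
    have hsub : ({Sum.inr none, Sum.inl (some ⟨0, by omega⟩), Sum.inl (some ⟨1, by omega⟩)} :
        Set (Option (Fin (a - 1)) ⊕ Option (Fin (b - 1)))) ⊆ {u | c u = c (Sum.inr none)} := by
      rintro u (rfl | rfl | rfl)
      · rfl
      · exact (hopt _).resolve_left (hp _ _ (ds_adj_Lleaf _).symm)
      · exact (hopt _).resolve_left (hp _ _ (ds_adj_Lleaf _).symm)
    have h3le : 3 ≤ {u | c u = c (Sum.inr none)}.ncard := by
      have hc : ({Sum.inr none, Sum.inl (some ⟨0, by omega⟩), Sum.inl (some ⟨1, by omega⟩)} :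
          Set (Option (Fin (a - 1)) ⊕ Option (Fin (b - 1)))).ncard = 3 := by
        rw [Set.ncard_insert_of_notMem (by simp), Set.ncard_pair (by simp)]
      calc 3 = _ := hc.symm
        _ ≤ _ := Set.ncard_le_ncard hsub (Set.toFinite _)
    have hint : {u | c u = c (Sum.inr none) ∧ (u = x ∨ (doubleStar a b).Adj x u)} ⊆
        ({x} : Set _) := by
      rintro u ⟨h1, h2 | h2⟩
      · exact h2
      · have := ds_leafL_adj h2
        subst this
        exact absurd h1 hLR
    have hle1 : {u | c u = c (Sum.inr none) ∧ (u = x ∨ (doubleStar a b).Adj x u)}.ncard ≤ 1 := by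
      calc _ ≤ ({x} : Set _).ncard := Set.ncard_le_ncard hint (Set.toFinite _)
        _ = 1 := Set.ncard_singleton _
    omega

theorem md_doubleStar (a b : ℕ) (ha : 2 ≤ a) (hb : 2 ≤ b) :
    (doubleStar a b).majorityDominatorChromaticNumber =
      if 3 ≤ a ∧ 3 ≤ b then 3 else 2 := by
  unfold SimpleGraph.majorityDominatorChromaticNumber
  have not0 : ¬ ∃ c : Option (Fin (a - 1)) ⊕ Option (Fin (b - 1)) → Fin 0,
      (doubleStar a b).IsMajorityDominatorColoring c := by
    rintro ⟨c, _⟩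
    exact (c (Sum.inl none)).elim0
  have not1 : ¬ ∃ c : Option (Fin (a - 1)) ⊕ Option (Fin (b - 1)) → Fin 1,
      (doubleStar a b).IsMajorityDominatorColoring c := by
    rintro ⟨c, hp, _⟩
    exact hp _ _ ds_adj_LR (Subsingleton.elim _ _)
  split_ifs with h3
  · obtain ⟨ha3, hb3⟩ := h3
    apply sInf_eq_of_mem
    · exact ⟨c3 a b, mem3⟩
    · intro m hm
      interval_cases m
      · exact not0
      · exact not1
      · rintro ⟨c, hc⟩
        exact not_two ha3 hb3 c hc
  · -- a = 2 or b = 2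
    have hab : a = 2 ∨ b = 2 := by
      rcases not_and_or.mp h3 with h | h <;> omega
    apply sInf_eq_of_mem
    · refine ⟨c2 a b, c2_proper, ?_⟩
      rcases hab with rfl | rfl
      · -- a = 2 : use color class 1 = {inl (some 0), inr none}
        have hcl : {u | c2 2 b u = 1} = {Sum.inl (some 0), Sum.inr none} := by
          ext u
          rcases u with (_ | i) | (_ | j) <;> simp [c2]
          exact Subsingleton.elim (α := Fin 1) i 0
        intro w
        rcases w with (_ | i) | (_ | j)
        · exact dom_of_pair _ _ 1 _ _ _ (by simp) hcl (Or.inr (Or.inr ds_adj_LR))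
        · exact dom_of_pair _ _ 1 _ _ _ (by simp) hcl
            (Or.inl (Or.inl (by rw [Subsingleton.elim (α := Fin 1) i 0])))
        · exact dom_of_pair _ _ 1 _ _ _ (by simp) hcl (Or.inr (Or.inl rfl))
        · exact dom_of_pair _ _ 1 _ _ _ (by simp) hcl (Or.inr (Or.inr (ds_adj_Rleaf j).symm))
      · -- b = 2 : use color class 0 = {inl none, inr (some 0)}
        have hcl : {u | c2 a 2 u = 0} = {Sum.inl none, Sum.inr (some 0)} := by
          ext u
          rcases u with (_ | i) | (_ | j) <;> simp [c2]
          exact Subsingleton.elim (α := Fin 1) j 0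
        intro w
        rcases w with (_ | i) | (_ | j)
        · exact dom_of_pair _ _ 0 _ _ _ (by simp) hcl (Or.inl (Or.inl rfl))
        · exact dom_of_pair _ _ 0 _ _ _ (by simp) hcl (Or.inl (Or.inr (ds_adj_Lleaf i).symm))
        · exact dom_of_pair _ _ 0 _ _ _ (by simp) hcl (Or.inl (Or.inr ds_adj_LR.symm))
        · exact dom_of_pair _ _ 0 _ _ _ (by simp) hcl
            (Or.inr (Or.inl (by rw [Subsingleton.elim (α := Fin 1) j 0])))
    · intro m hm
      interval_cases m
      · exact not0
      · exact not1
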